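/- Fix an even integer m ≥ 4 and a real number L > 0. For each integer k ≥ 1 write k = j·m + r with integers j ≥ 0 and 1 ≤ r ≤ m, and define n(k) := π²·m²·(j + 1/2)²/L² if 1 ≤ r ≤ m/2, and n(k) := π²·m²·(j + 1)²/L² if m/2 < r ≤ m; set c(k) := (n(k) − π²·k²/L²)/k. Then the set of cluster points of the sequence (c(k))_{k≥1} is exactly { 2π²·s/L² : s an integer with 0 ≤ s ≤ m/2 − 1 }; in particular it has exactly m/2 elements. -/

import Mathlib

open Real Filter Topology

/-- Even-`m` case of the final proposition of Section 6.1 (Neumann energies of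
the equilateral `m`-star): the cluster point set is
`{2π²s/L² : 0 ≤ s ≤ m/2 − 1}`, which has exactly `m/2` elements. -/
theorem stmt12 (m : ℕ) (hm : 4 ≤ m) (heven : Even m) (L : ℝ) (hL : 0 < L)
    (nn c : ℕ → ℝ)
    (hn : ∀ j r : ℕ, 1 ≤ r → r ≤ m →
      nn (j * m + r) = if r ≤ m / 2
        then π ^ 2 * (m : ℝ) ^ 2 * ((j : ℝ) + 1 / 2) ^ 2 / L ^ 2
        else π ^ 2 * (m : ℝ) ^ 2 * ((j : ℝ) + 1) ^ 2 / L ^ 2)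
    (hc : ∀ k : ℕ, c k = (nn k - π ^ 2 * (k : ℝ) ^ 2 / L ^ 2) / (k : ℝ)) :
    {x : ℝ | MapClusterPt x atTop (fun n : ℕ => c (n + 1))}
      = {y : ℝ | ∃ s : ℕ, s ≤ m / 2 - 1 ∧ y = 2 * π ^ 2 * (s : ℝ) / L ^ 2}
    ∧ {x : ℝ | MapClusterPt x atTop (fun n : ℕ => c (n + 1))}.ncard = m / 2 := by
  obtain ⟨h, hm2⟩ := heven
  have hh : 2 ≤ h := by omega
  have hmh : m / 2 = h := by omega
  have hπ : (0:ℝ) < π := Real.pi_pos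
  have hL2 : (L:ℝ) ^ 2 ≠ 0 := by positivity
  have hmr : (m:ℝ) = (h:ℝ) + (h:ℝ) := by exact_mod_cast congrArg (Nat.cast (R := ℝ)) hm2
  -- the core formula
  have key : ∀ j r s : ℕ, 1 ≤ r → r ≤ m →
      ((r ≤ h ∧ s + r = h) ∨ (h < r ∧ s + r = m)) →
      c (j*m+r) = 2*π^2*(s:ℝ)/L^2 + π^2*(s:ℝ)^2/(L^2*((j*m+r : ℕ):ℝ)) := by
    intro j r s hr1 hrm hcase
    have hk0 : ((j*m+r : ℕ):ℝ) ≠ 0 := by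
      have : (0:ℕ) < j*m+r := by omega
      exact_mod_cast this.ne'
    have hk0' : (j:ℝ)*((h:ℝ)+(h:ℝ)) + (r:ℝ) ≠ 0 := by
      have h1 : (1:ℝ) ≤ (r:ℝ) := by exact_mod_cast hr1
      have h2 : (0:ℝ) ≤ (j:ℝ)*((h:ℝ)+(h:ℝ)) := by positivity
      linarith
    rw [hc, hn j r hr1 hrm]
    rcases hcase with ⟨hrh, hsr⟩ | ⟨hrh, hsr⟩
    · rw [if_pos (by omega : r ≤ m / 2)]
      have hsr' : (s:ℝ) = (h:ℝ) - (r:ℝ) := by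
        have := congrArg (Nat.cast (R := ℝ)) hsr; push_cast at this; linarith
      push_cast [hmr, hsr']
      field_simp
      ring
    · rw [if_neg (by omega : ¬ r ≤ m / 2)]
      have hsr' : (s:ℝ) = (h:ℝ) + (h:ℝ) - (r:ℝ) := by
        have := congrArg (Nat.cast (R := ℝ)) hsr; push_cast [hmr] at this; linarith
      push_cast [hmr, hsr']
      field_simp
      ring
  -- limit values
  set v : ℕ → ℝ := fun s => 2*π^2*(s:ℝ)/L^2 with hv
  -- forward: each v s with s ≤ h-1 is a cluster point
  have fwd : ∀ s : ℕ, s ≤ h - 1 → MapClusterPt (v s) atTop (fun n : ℕ => c (n + 1)) := by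
    intro s hs
    set r : ℕ := h - s with hr
    have hr1 : 1 ≤ r := by omega
    have hrm : r ≤ m := by omega
    have hφ : Tendsto (fun j : ℕ => j*m + r - 1) atTop atTop := by
      apply tendsto_atTop_mono (fun j => ?_) tendsto_id
      have := Nat.le_mul_of_pos_right j (show 0 < m by omega)
      simp only [id]; omega
    apply MapClusterPt.of_comp hφ
    have hcomp : ((fun n : ℕ => c (n + 1)) ∘ (fun j : ℕ => j*m + r - 1))
        = fun j : ℕ => v s + π^2*(s:ℝ)^2/(L^2*((j*m+r : ℕ):ℝ)) := by
      funext j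
      have : j*m + r - 1 + 1 = j*m + r := by omega
      simp only [Function.comp, this]
      exact key j r s hr1 hrm (Or.inl ⟨by omega, by omega⟩)
    rw [hcomp]
    apply Filter.Tendsto.mapClusterPt
    have hden : Tendsto (fun j : ℕ => L^2*((j*m+r : ℕ):ℝ)) atTop atTop := by
      apply Tendsto.const_mul_atTop (by positivity : (0:ℝ) < L^2)
      apply tendsto_natCast_atTop_atTop.comp
      apply tendsto_atTop_mono (fun j => ?_) tendsto_id
      have := Nat.le_mul_of_pos_right j (show 0 < m by omega)
      simp only [id]; omega
    have h0 : Tendsto (fun j : ℕ => π^2*(s:ℝ)^2/(L^2*((j*m+r : ℕ):ℝ))) atTop (𝓝 0) :=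
      Tendsto.div_atTop tendsto_const_nhds hden
    simpa using tendsto_const_nhds.add h0
  -- uniform decomposition for every k ≥ 1
  have dec : ∀ k : ℕ, 1 ≤ k → ∃ s : ℕ, s ≤ h - 1 ∧
      |c k - v s| ≤ π^2*(h:ℝ)^2/(L^2*(k:ℝ)) := by
    intro k hk
    set j : ℕ := (k-1)/m with hj
    set r : ℕ := (k-1)%m + 1 with hrr
    have hdm := Nat.div_add_mod (k-1) m
    have hml := Nat.mod_lt (k-1) (show 0 < m by omega)
    have hjm : j * m = m * ((k-1)/m) := by rw [hj, Nat.mul_comm]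
    have hjr : j*m + r = k := by omega
    have hr1 : 1 ≤ r := by omega
    have hrm : r ≤ m := by omega
    have hk0 : (0:ℝ) < (k:ℝ) := by exact_mod_cast hk
    by_cases hrh : r ≤ h
    · refine ⟨h - r, by omega, ?_⟩
      have hkey := key j r (h - r) hr1 hrm (Or.inl ⟨hrh, by omega⟩)
      rw [hjr] at hkey
      rw [hkey, hv, add_sub_cancel_left, abs_of_nonneg (by positivity)]
      gcongr
      exact_mod_cast Nat.sub_le h r
    · refine ⟨m - r, by omega, ?_⟩
      have hkey := key j r (m - r) hr1 hrm (Or.inr ⟨by omega, by omega⟩)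
      rw [hjr] at hkey
      rw [hkey, hv, add_sub_cancel_left, abs_of_nonneg (by positivity)]
      gcongr
      exact_mod_cast (by omega : m - r ≤ h)
  -- the set equality
  have hEq : {x : ℝ | MapClusterPt x atTop (fun n : ℕ => c (n + 1))}
      = {y : ℝ | ∃ s : ℕ, s ≤ m / 2 - 1 ∧ y = 2 * π ^ 2 * (s : ℝ) / L ^ 2} := by
    ext x
    simp only [Set.mem_setOf_eq, hmh]
    constructor
    · intro hx
      by_contra hne
      push_neg at hne
      have hne' : ∀ s : ℕ, s ≤ h - 1 → x ≠ v s := by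
        intro s hs hxe
        exact hne s hs (by rw [hxe, hv])
      have hR : (Finset.range h).Nonempty := ⟨0, by simp; omega⟩
      set ε : ℝ := (Finset.range h).inf' hR (fun s => |x - v s|) with hε
      have hεpos : 0 < ε := by
        rw [hε, Finset.lt_inf'_iff]
        intro s hsr
        have : x ≠ v s := hne' s (by simp at hsr; omega)
        exact abs_pos.mpr (sub_ne_zero.mpr this)
      set C : ℝ := π^2*(h:ℝ)^2/L^2 with hC
      have hCpos : 0 < C := by rw [hC]; positivity
      obtain ⟨N, hN⟩ := exists_nat_gt (2*C/ε)
      have hfreq := (mapClusterPt_iff_frequently.mp hx) (Metric.ball x (ε/2))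
        (Metric.ball_mem_nhds x (by positivity))
      obtain ⟨n, hnN, hn'⟩ := (frequently_atTop.mp hfreq) N
      obtain ⟨s, hs, hsb⟩ := dec (n+1) (by omega)
      have hnb : C / ((n:ℝ)+1) < ε/2 := by
        have hNn : (N:ℝ) ≤ (n:ℝ) := by exact_mod_cast hnN
        rw [div_lt_iff₀ hεpos] at hN
        rw [div_lt_iff₀ (by positivity : (0:ℝ) < (n:ℝ)+1)]
        nlinarith
      have hsb' : |c (n+1) - v s| ≤ C / ((n:ℝ)+1) := by
        have heq2 : π^2*(h:ℝ)^2/(L^2*((n+1:ℕ):ℝ)) = C / ((n:ℝ)+1) := by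
          rw [hC]; push_cast; field_simp
        rw [← heq2]; exact hsb
      have hxc : |c (n+1) - x| < ε/2 := by
        have := Metric.mem_ball.mp hn'
        rwa [Real.dist_eq, abs_sub_comm] at this
      have hεle : ε ≤ |x - v s| := Finset.inf'_le _ (by simp; omega)
      have hlt : |x - v s| < ε := by
        calc |x - v s| ≤ |x - c (n+1)| + |c (n+1) - v s| := abs_sub_le _ _ _
          _ < ε/2 + ε/2 := by
              rw [abs_sub_comm x (c (n+1))]
              exact add_lt_add_of_lt_of_le hxc (hsb'.trans hnb.le)
          _ = ε := by ring
      linarith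
    · rintro ⟨s, hs, rfl⟩
      exact fwd s hs
  refine ⟨hEq, ?_⟩
  have hinj : Function.Injective v := by
    apply StrictMono.injective (f := v)
    intro a b hlt
    simp only [hv]
    gcongr
  have himg : {y : ℝ | ∃ s : ℕ, s ≤ m / 2 - 1 ∧ y = 2 * π ^ 2 * (s : ℝ) / L ^ 2}
      = v '' Set.Iic (m / 2 - 1) := by
    ext y
    constructor
    · rintro ⟨s, hs, rfl⟩
      exact ⟨s, hs, by rw [hv]⟩
    · rintro ⟨s, hs, rfl⟩
      exact ⟨s, hs, by rw [hv]⟩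
  rw [hEq, himg, Set.ncard_image_of_injective _ hinj, ← Finset.coe_Iic,
    Set.ncard_coe_finset, Nat.card_Iic]
  omega
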